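/- The vertex set of the standard n-cube {−1,1}^n ⊂ ℝ^n (n ≥ 2), with the Euclidean metric, is 3-point homogeneous: for any two triples (A_0,A_1,A_2) and (A'_0,A'_1,A'_2) of vertices with ‖A_i − A_j‖ = ‖A'_i − A'_j‖ for all i,j, there is an isometry of the cube's vertex set (a self-bijection of {−1,1}^n preserving all pairwise Euclidean distances) mapping A_i to A'_i for i = 0,1,2. -/

import Mathlib

/-- The vertex set of the standard `n`-cube `{−1,1}ⁿ`. -/
def cubeVertices (n : ℕ) : Set (EuclideanSpace ℝ (Fin n)) :=
  {x | ∀ i, x i = 1 ∨ x i = -1}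

lemma distSq (n : ℕ) (u v : EuclideanSpace ℝ (Fin n))
    (hu : u ∈ cubeVertices n) (hv : v ∈ cubeVertices n) :
    dist u v ^ 2 = 4 * ((Finset.univ.filter (fun i => u i ≠ v i)).card : ℝ) := by
  classical
  rw [EuclideanSpace.dist_eq, Real.sq_sqrt (by positivity), Finset.card_filter]
  push_cast
  rw [Finset.mul_sum]
  apply Finset.sum_congr rfl
  intro i _
  rcases hu i with h1|h1 <;> rcases hv i with h2|h2 <;>
    simp [h1, h2, Real.dist_eq] <;> norm_num

lemma signedPerm (n : ℕ) (ε : Fin n → ℝ) (hε : ∀ i, ε i = 1 ∨ ε i = -1)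
    (σ : Equiv.Perm (Fin n)) :
    ∃ f : EuclideanSpace ℝ (Fin n) → EuclideanSpace ℝ (Fin n),
      (∀ x i, f x i = ε i * x (σ i)) ∧
      Set.BijOn f (cubeVertices n) (cubeVertices n) ∧
      (∀ x y, dist (f x) (f y) = dist x y) := by
  classical
  have hsq : ∀ i, ε i * ε i = 1 := by
    intro i; rcases hε i with h|h <;> rw [h] <;> norm_num
  refine ⟨fun x => WithLp.toLp 2 (fun i => ε i * x (σ i)), fun _ _ => rfl, ?_, ?_⟩
  · have hmaps : ∀ x ∈ cubeVertices n, WithLp.toLp 2 (fun i => ε i * x (σ i)) ∈ cubeVertices n := by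
      intro x hx i
      rcases hε i with h|h <;> rcases hx (σ i) with h2|h2 <;> simp [h, h2]
    have hinv : ∀ y : EuclideanSpace ℝ (Fin n),
        WithLp.toLp 2 (fun i => ε i * (fun j => ε (σ.symm j) * y (σ.symm j)) (σ i)) = y := by
      intro y; ext i
      simp only [Equiv.symm_apply_apply, ← mul_assoc, hsq, one_mul]
    refine ⟨hmaps, ?_, ?_⟩
    · intro x hx y hy hxy
      ext i
      have := congrArg (fun z => z (σ.symm i)) hxy
      simp only at this
      have h1 := hsq (σ.symm i)
      have h2 : x (σ (σ.symm i)) = y (σ (σ.symm i)) := by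
        rcases hε (σ.symm i) with h|h <;> rw [h] at this <;> linarith
      rwa [Equiv.apply_symm_apply] at h2
    · intro y hy
      refine ⟨WithLp.toLp 2 (fun j => ε (σ.symm j) * y (σ.symm j)), ?_, ?_⟩
      · intro j
        rcases hε (σ.symm j) with h|h <;> rcases hy (σ.symm j) with h2|h2 <;> simp [h, h2]
      · exact hinv y
  · intro x y
    rw [EuclideanSpace.dist_eq, EuclideanSpace.dist_eq]
    congr 1
    rw [← Equiv.sum_comp σ (fun i => dist (x i) (y i) ^ 2)]
    apply Finset.sum_congr rfl
    intro i _
    simp only [Real.dist_eq]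
    rw [← mul_sub, abs_mul]
    rcases hε i with h|h <;> rw [h] <;> norm_num

lemma pm_key (a b a' b' : ℝ) (ha : a = 1 ∨ a = -1) (hb : b = 1 ∨ b = -1)
    (ha' : a' = 1 ∨ a' = -1) (hb' : b' = 1 ∨ b' = -1)
    (h : (a ≠ b) ↔ (a' ≠ b')) : a' * (a * b) = b' := by
  rcases ha with rfl|rfl <;> rcases hb with rfl|rfl <;>
    rcases ha' with rfl|rfl <;> rcases hb' with rfl|rfl <;> norm_num at *

lemma pm_xor (a b c : ℝ) (ha : a = 1 ∨ a = -1) (hb : b = 1 ∨ b = -1)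
    (hc : c = 1 ∨ c = -1) : (b ≠ c) ↔ ¬((a ≠ b) ↔ (a ≠ c)) := by
  rcases ha with rfl|rfl <;> rcases hb with rfl|rfl <;> rcases hc with rfl|rfl <;> norm_num

lemma exists_perm {n : ℕ} {β : Type*} [Fintype β] [DecidableEq β]
    (c c' : Fin n → β)
    (h : ∀ b, (Finset.univ.filter (fun i => c i = b)).card
            = (Finset.univ.filter (fun i => c' i = b)).card) :
    ∃ σ : Equiv.Perm (Fin n), ∀ i, c (σ i) = c' i := by
  classical
  have e : ∀ b, {i // c' i = b} ≃ {i // c i = b} := by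
    intro b
    apply Fintype.equivOfCardEq
    rw [Fintype.card_subtype, Fintype.card_subtype, h]
  refine ⟨(Equiv.sigmaFiberEquiv c').symm.trans
    ((Equiv.sigmaCongrRight e).trans (Equiv.sigmaFiberEquiv c)), fun i => ?_⟩
  exact ((e (c' i)) ⟨i, rfl⟩).2

open Finset in
/-- For `P Q : Fin n → Prop`, the four Venn-cell cardinalities determine and are
determined by the three "difference" counts and `n`. -/
lemma cell_counts {n : ℕ} (P Q : Fin n → Prop) [DecidablePred P] [DecidablePred Q] :
    (univ.filter (fun i => P i ∧ Q i)).card + (univ.filter (fun i => P i ∧ ¬ Q i)).card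
      = (univ.filter P).card ∧
    (univ.filter (fun i => P i ∧ Q i)).card + (univ.filter (fun i => ¬ P i ∧ Q i)).card
      = (univ.filter Q).card ∧
    (univ.filter (fun i => P i ∧ ¬ Q i)).card + (univ.filter (fun i => ¬ P i ∧ Q i)).card
      = (univ.filter (fun i => ¬ (P i ↔ Q i))).card ∧
    (univ.filter (fun i => P i ∧ Q i)).card + (univ.filter (fun i => P i ∧ ¬ Q i)).card
      + (univ.filter (fun i => ¬ P i ∧ Q i)).card
      + (univ.filter (fun i => ¬ P i ∧ ¬ Q i)).card = n := by
  classical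
  refine ⟨?_, ?_, ?_, ?_⟩
  · rw [← Finset.filter_filter, ← Finset.filter_filter]
    exact Finset.card_filter_add_card_filter_not (fun i => Q i)
  · have h1 : (univ.filter (fun i => P i ∧ Q i)) = (univ.filter (fun i => Q i ∧ P i)) := by
      apply Finset.filter_congr; intro i _; tauto
    have h2 : (univ.filter (fun i => ¬ P i ∧ Q i)) = (univ.filter (fun i => Q i ∧ ¬ P i)) := by
      apply Finset.filter_congr; intro i _; tauto
    rw [h1, h2, ← Finset.filter_filter, ← Finset.filter_filter]
    exact Finset.card_filter_add_card_filter_not (fun i => P i)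
  · have h1 : (univ.filter (fun i => P i ∧ ¬ Q i))
        = (univ.filter (fun i => ¬ (P i ↔ Q i) ∧ P i)) := by
      apply Finset.filter_congr; intro i _; tauto
    have h2 : (univ.filter (fun i => ¬ P i ∧ Q i))
        = (univ.filter (fun i => ¬ (P i ↔ Q i) ∧ ¬ P i)) := by
      apply Finset.filter_congr; intro i _; tauto
    rw [h1, h2, ← Finset.filter_filter, ← Finset.filter_filter]
    exact Finset.card_filter_add_card_filter_not (fun i => P i)
  · have h3 : (univ.filter (fun i => P i ∧ Q i)).card
        + (univ.filter (fun i => P i ∧ ¬ Q i)).card = (univ.filter P).card := by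
      rw [← Finset.filter_filter, ← Finset.filter_filter]
      exact Finset.card_filter_add_card_filter_not (fun i => Q i)
    have h4 : (univ.filter (fun i => ¬ P i ∧ Q i)).card
        + (univ.filter (fun i => ¬ P i ∧ ¬ Q i)).card
        = (univ.filter (fun i => ¬ P i)).card := by
      rw [← Finset.filter_filter, ← Finset.filter_filter]
      exact Finset.card_filter_add_card_filter_not (fun i => Q i)
    have h5 : (univ.filter P).card + (univ.filter (fun i => ¬ P i)).card = n := by
      rw [Finset.card_filter_add_card_filter_not (fun i => P i)]
      simp
    omega

/-- The vertex set of the standard `n`-cube, `n ≥ 2`, is 3-point homogeneous. -/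
theorem stmt9 (n : ℕ) (hn : 2 ≤ n)
    (A A' : Fin 3 → EuclideanSpace ℝ (Fin n))
    (hA : ∀ k, A k ∈ cubeVertices n) (hA' : ∀ k, A' k ∈ cubeVertices n)
    (hd : ∀ k l, dist (A k) (A l) = dist (A' k) (A' l)) :
    ∃ f : EuclideanSpace ℝ (Fin n) → EuclideanSpace ℝ (Fin n),
      Set.BijOn f (cubeVertices n) (cubeVertices n) ∧
      (∀ x ∈ cubeVertices n, ∀ y ∈ cubeVertices n, dist (f x) (f y) = dist x y) ∧
      ∀ k, f (A k) = A' k := by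
  classical
  -- Hamming distances are equal
  have hcard : ∀ k l : Fin 3,
      (Finset.univ.filter (fun i => A k i ≠ A l i)).card
        = (Finset.univ.filter (fun i => A' k i ≠ A' l i)).card := by
    intro k l
    have h1 := distSq n (A k) (A l) (hA k) (hA l)
    have h2 := distSq n (A' k) (A' l) (hA' k) (hA' l)
    rw [hd k l, h2] at h1
    exact_mod_cast mul_left_cancel₀ (by norm_num : (4:ℝ) ≠ 0) h1.symm
  set P : Fin n → Prop := fun i => A 0 i ≠ A 1 i with hP
  set Q : Fin n → Prop := fun i => A 0 i ≠ A 2 i with hQ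
  set P' : Fin n → Prop := fun i => A' 0 i ≠ A' 1 i with hP'
  set Q' : Fin n → Prop := fun i => A' 0 i ≠ A' 2 i with hQ'
  obtain ⟨e1, e2, e3, e4⟩ := cell_counts P Q
  obtain ⟨e1', e2', e3', e4'⟩ := cell_counts P' Q'
  -- the three difference counts coincide
  have hPP' : (Finset.univ.filter P).card = (Finset.univ.filter P').card := hcard 0 1
  have hQQ' : (Finset.univ.filter Q).card = (Finset.univ.filter Q').card := hcard 0 2
  have hXX' : (Finset.univ.filter (fun i => ¬ (P i ↔ Q i))).card
      = (Finset.univ.filter (fun i => ¬ (P' i ↔ Q' i))).card := by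
    have hx : (Finset.univ.filter (fun i => A 1 i ≠ A 2 i))
        = Finset.univ.filter (fun i => ¬ (P i ↔ Q i)) := by
      apply Finset.filter_congr; intro i _
      exact pm_xor (A 0 i) (A 1 i) (A 2 i) (hA 0 i) (hA 1 i) (hA 2 i)
    have hx' : (Finset.univ.filter (fun i => A' 1 i ≠ A' 2 i))
        = Finset.univ.filter (fun i => ¬ (P' i ↔ Q' i)) := by
      apply Finset.filter_congr; intro i _
      exact pm_xor (A' 0 i) (A' 1 i) (A' 2 i) (hA' 0 i) (hA' 1 i) (hA' 2 i)
    rw [← hx, ← hx', hcard 1 2]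
  -- all four Venn cells coincide in size
  have ha : (Finset.univ.filter (fun i => P i ∧ Q i)).card
      = (Finset.univ.filter (fun i => P' i ∧ Q' i)).card := by omega
  have hb : (Finset.univ.filter (fun i => P i ∧ ¬ Q i)).card
      = (Finset.univ.filter (fun i => P' i ∧ ¬ Q' i)).card := by omega
  have hc : (Finset.univ.filter (fun i => ¬ P i ∧ Q i)).card
      = (Finset.univ.filter (fun i => ¬ P' i ∧ Q' i)).card := by omega
  have hdd : (Finset.univ.filter (fun i => ¬ P i ∧ ¬ Q i)).card
      = (Finset.univ.filter (fun i => ¬ P' i ∧ ¬ Q' i)).card := by omega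
  -- build the permutation matching the cell functions
  set cell : Fin n → Bool × Bool := fun i => (decide (P i), decide (Q i)) with hcell
  set cell' : Fin n → Bool × Bool := fun i => (decide (P' i), decide (Q' i)) with hcell'
  have hfib : ∀ b : Bool × Bool,
      (Finset.univ.filter (fun i => cell i = b)).card
        = (Finset.univ.filter (fun i => cell' i = b)).card := by
    rintro ⟨p, q⟩
    have key : ∀ (R S : Fin n → Prop) (_ : DecidablePred R) (_ : DecidablePred S),
        (Finset.univ.filter (fun i => ((decide (R i), decide (S i)) : Bool × Bool) = (p, q)))
          = Finset.univ.filter (fun i =>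
              (cond p (R i) (¬ R i)) ∧ (cond q (S i) (¬ S i))) := by
      intro R S _ _
      apply Finset.filter_congr; intro i _
      cases p <;> cases q <;>
        simp [Prod.ext_iff, decide_eq_true_eq, decide_eq_false_iff_not]
    rw [hcell, hcell', key P Q inferInstance inferInstance,
      key P' Q' inferInstance inferInstance]
    cases p <;> cases q
    · simp only [Bool.cond_false]; convert hdd using 3
    · simp only [Bool.cond_false, Bool.cond_true]; convert hc using 3
    · simp only [Bool.cond_false, Bool.cond_true]; convert hb using 3
    · simp only [Bool.cond_true]; convert ha using 3
  obtain ⟨σ, hσ⟩ := exists_perm cell cell' hfib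
  -- the sign vector
  set ε : Fin n → ℝ := fun i => A' 0 i * A 0 (σ i) with hε_def
  have hε : ∀ i, ε i = 1 ∨ ε i = -1 := by
    intro i
    rcases hA' 0 i with h|h <;> rcases hA 0 (σ i) with h2|h2 <;>
      · simp only [hε_def]; rw [h, h2]; norm_num
  obtain ⟨f, hf, hbij, hdist⟩ := signedPerm n ε hε σ
  refine ⟨f, hbij, fun x _ y _ => hdist x y, ?_⟩
  have hσ1 : ∀ i, P (σ i) ↔ P' i := by
    intro i
    have := congrArg Prod.fst (hσ i)
    simpa [hcell, hcell', decide_eq_decide] using this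
  have hσ2 : ∀ i, Q (σ i) ↔ Q' i := by
    intro i
    have := congrArg Prod.snd (hσ i)
    simpa [hcell, hcell', decide_eq_decide] using this
  intro k
  ext i
  rw [hf]
  fin_cases k
  · show ε i * A 0 (σ i) = A' 0 i
    rw [hε_def, mul_assoc]
    exact pm_key (A 0 (σ i)) (A 0 (σ i)) (A' 0 i) (A' 0 i)
      (hA 0 (σ i)) (hA 0 (σ i)) (hA' 0 i) (hA' 0 i) (by simp)
  · show ε i * A 1 (σ i) = A' 1 i
    rw [hε_def, mul_assoc]
    exact pm_key (A 0 (σ i)) (A 1 (σ i)) (A' 0 i) (A' 1 i)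
      (hA 0 (σ i)) (hA 1 (σ i)) (hA' 0 i) (hA' 1 i) (hσ1 i)
  · show ε i * A 2 (σ i) = A' 2 i
    rw [hε_def, mul_assoc]
    exact pm_key (A 0 (σ i)) (A 2 (σ i)) (A' 0 i) (A' 2 i)
      (hA 0 (σ i)) (hA 2 (σ i)) (hA' 0 i) (hA' 2 i) (hσ2 i)
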